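/- arXiv:math/0607195 — 2 statements merged into one kernel-verified Lean document; each statement's English description precedes it below -/
import Mathlib

section
/- Every limit point L = (L₁, L₂) of the sequence (f(K'_n)) satisfies ln(12)/15 ≤ L_i ≤ 4·ln(2)/15 < ln(2)/3 for i = 1, 2; in particular L ≠ (0,0) and L ≠ (ln 2/3, ln 2/3). -/
open Finset Real Filter

/-- `S_m^e = ∑_{k even} C(m,k)·3^k`. -/
def Se (m : ℕ) : ℕ := ∑ k ∈ Finset.range (m + 1), if Even k then m.choose k * 3 ^ k else 0

/-- `S_m^o = ∑_{k odd} C(m,k)·3^k`. -/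
def So (m : ℕ) : ℕ := ∑ k ∈ Finset.range (m + 1), if Odd k then m.choose k * 3 ^ k else 0

/-- The sequence of `f`-invariants `f(K'_n)` in `ℝ²`. -/
noncomputable def fK' (n : ℕ) : ℝ × ℝ :=
  if Odd n then
    (Real.log ((4 : ℝ) ^ ((n + 1) / 2) * (Se ((n + 1) / 2) : ℝ)) / ((15 * (n : ℝ) - 9) / 2),
     Real.log ((4 : ℝ) ^ ((n + 1) / 2) * (So ((n + 1) / 2) : ℝ)) / ((15 * (n : ℝ) - 9) / 2))
  else
    (Real.log ((4 : ℝ) ^ (n / 2 + 1) * (Se (n / 2) : ℝ)) / ((15 * (n : ℝ) - 12) / 2),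
     Real.log ((4 : ℝ) ^ (n / 2 + 1) * (So (n / 2) : ℝ)) / ((15 * (n : ℝ) - 12) / 2))


open Topology

lemma Se_add_So (m : ℕ) : Se m + So m = 4 ^ m := by
  have h4 : (4:ℕ) ^ m = (3 + 1) ^ m := by norm_num
  rw [Se, So, ← Finset.sum_add_distrib, h4, add_pow]
  apply Finset.sum_congr rfl
  intro k _
  rcases Nat.even_or_odd k with h | h
  · simp [h, Nat.not_odd_iff_even.mpr h, mul_comm]
  · simp [h, Nat.not_even_iff_odd.mpr h, mul_comm]

lemma Se_sub_So (m : ℕ) : (Se m : ℤ) - So m = (-2) ^ m := by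
  have h : ((-2:ℤ)) ^ m = (-3 + 1) ^ m := by norm_num
  rw [h, add_pow, Se, So]
  push_cast [apply_ite (Nat.cast : ℕ → ℤ)]
  rw [← Finset.sum_sub_distrib]
  apply Finset.sum_congr rfl
  intro k _
  rcases Nat.even_or_odd k with hk | hk
  · have : (-3:ℤ)^k = 3^k := hk.neg_pow 3
    simp [hk, Nat.not_odd_iff_even.mpr hk, this, mul_comm]
  · have : (-3:ℤ)^k = -(3^k) := hk.neg_pow 3
    simp [hk, Nat.not_even_iff_odd.mpr hk, this, mul_comm]

lemma two_Se (m : ℕ) : 2 * (Se m : ℤ) = 4 ^ m + (-2) ^ m := by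
  have h1 : (Se m : ℤ) + So m = 4 ^ m := by exact_mod_cast congrArg (Nat.cast : ℕ → ℤ) (Se_add_So m)
  have h2 := Se_sub_So m
  linarith

lemma two_So (m : ℕ) : 2 * (So m : ℤ) = 4 ^ m - (-2) ^ m := by
  have h1 : (Se m : ℤ) + So m = 4 ^ m := by exact_mod_cast congrArg (Nat.cast : ℕ → ℤ) (Se_add_So m)
  have h2 := Se_sub_So m
  linarith

lemma neg_two_pow_bounds (k : ℕ) : -((2:ℤ)^k) ≤ (-2:ℤ)^k ∧ (-2:ℤ)^k ≤ 2^k := by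
  have hp : (0:ℤ) < 2^k := by positivity
  rcases Nat.even_or_odd k with h | h
  · rw [h.neg_pow]; constructor <;> linarith
  · rw [h.neg_pow]; constructor <;> linarith

lemma S_bounds (j : ℕ) :
    (4:ℝ)^j ≤ (Se (j+1) : ℝ) ∧ (Se (j+1) : ℝ) ≤ 4^(j+1) ∧
    (4:ℝ)^j ≤ (So (j+1) : ℝ) ∧ (So (j+1) : ℝ) ≤ 4^(j+1) := by
  have hSe := two_Se (j+1)
  have hSo := two_So (j+1)
  have hb := neg_two_pow_bounds (j+1)
  have h24 : (2:ℤ)^j ≤ 4^j := pow_le_pow_left₀ (by norm_num) (by norm_num) j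
  have e4 : (4:ℤ)^(j+1) = 4 * 4^j := by ring
  have e2 : (2:ℤ)^(j+1) = 2 * 2^j := by ring
  have c1 : (4:ℤ)^j ≤ Se (j+1) := by linarith [hb.1, hb.2]
  have c2 : (Se (j+1) : ℤ) ≤ 4^(j+1) := by linarith [hb.1, hb.2, pow_pos (show (0:ℤ)<2 by norm_num) j]
  have c3 : (4:ℤ)^j ≤ So (j+1) := by linarith [hb.1, hb.2]
  have c4 : (So (j+1) : ℤ) ≤ 4^(j+1) := by linarith [hb.1, hb.2, pow_pos (show (0:ℤ)<2 by norm_num) j]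
  exact ⟨by exact_mod_cast c1, by exact_mod_cast c2, by exact_mod_cast c3, by exact_mod_cast c4⟩

lemma hlog4 : Real.log 4 = 2 * Real.log 2 := by
  rw [show (4:ℝ) = 2^2 by norm_num, Real.log_pow]; push_cast; ring

lemma coord_bound (j a : ℕ) {S : ℝ} (h1 : (4:ℝ)^j ≤ S) (h2 : S ≤ 4^(j+1)) :
    2*((a:ℝ) + j) * Real.log 2 ≤ Real.log ((4:ℝ)^a * S) ∧
    Real.log ((4:ℝ)^a * S) ≤ 2*((a:ℝ) + j + 1) * Real.log 2 := by
  have hpos : (0:ℝ) < 4^(a+j) := by positivity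
  have hlow : (4:ℝ)^(a+j) ≤ 4^a * S := by
    rw [pow_add]; exact mul_le_mul_of_nonneg_left h1 (by positivity)
  have hhigh : (4:ℝ)^a * S ≤ 4^(a+j+1) := by
    rw [show a+j+1 = a+(j+1) by ring, pow_add]
    exact mul_le_mul_of_nonneg_left h2 (by positivity)
  have l1 : Real.log ((4:ℝ)^(a+j)) = 2*((a:ℝ)+j) * Real.log 2 := by
    rw [Real.log_pow, hlog4]; push_cast; ring
  have l2 : Real.log ((4:ℝ)^(a+j+1)) = 2*((a:ℝ)+j+1) * Real.log 2 := by
    rw [Real.log_pow, hlog4]; push_cast; ring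
  constructor
  · rw [← l1]; exact Real.log_le_log hpos hlow
  · rw [← l2]; exact Real.log_le_log (lt_of_lt_of_le hpos hlow) hhigh

lemma fK'_mem : ∀ᶠ n : ℕ in atTop,
    ((4*(n:ℝ)+0)*Real.log 2/(15*(n:ℝ)-9) ≤ (fK' n).1 ∧
      (fK' n).1 ≤ (4*(n:ℝ)+4)*Real.log 2/(15*(n:ℝ)-12)) ∧
    ((4*(n:ℝ)+0)*Real.log 2/(15*(n:ℝ)-9) ≤ (fK' n).2 ∧
      (fK' n).2 ≤ (4*(n:ℝ)+4)*Real.log 2/(15*(n:ℝ)-12)) := by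
  have hlog2 : 0 < Real.log 2 := Real.log_pos (by norm_num)
  filter_upwards [eventually_ge_atTop 2] with n hn
  have hnr : (2:ℝ) ≤ (n:ℝ) := by exact_mod_cast hn
  have hd9 : (0:ℝ) < 15*(n:ℝ)-9 := by linarith
  have hd12 : (0:ℝ) < 15*(n:ℝ)-12 := by linarith
  -- generic step: from numerator bounds conclude the two inequalities
  have key : ∀ (num D : ℝ), 0 < D → 15*(n:ℝ)-12 ≤ D → D ≤ 15*(n:ℝ)-9 →
      2*(n:ℝ)*Real.log 2 ≤ num → num ≤ (2*(n:ℝ)+2)*Real.log 2 →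
      (4*(n:ℝ)+0)*Real.log 2/(15*(n:ℝ)-9) ≤ num/(D/2) ∧
      num/(D/2) ≤ (4*(n:ℝ)+4)*Real.log 2/(15*(n:ℝ)-12) := by
    intro num D hD hD1 hD2 hnum1 hnum2
    have hrw : num/(D/2) = 2*num/D := by field_simp
    rw [hrw]
    constructor
    · calc (4*(n:ℝ)+0)*Real.log 2/(15*(n:ℝ)-9)
          ≤ (4*(n:ℝ)+0)*Real.log 2/D := by
            apply div_le_div_of_nonneg_left _ hD hD2
            · positivity
      _ ≤ 2*num/D := by
            apply div_le_div_of_nonneg_right ?_ hD.le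
            · linarith
    · calc 2*num/D ≤ ((4*(n:ℝ)+4)*Real.log 2)/D := by
            apply div_le_div_of_nonneg_right ?_ hD.le
            · linarith
      _ ≤ (4*(n:ℝ)+4)*Real.log 2/(15*(n:ℝ)-12) := by
            apply div_le_div_of_nonneg_left _ hd12 hD1
            · positivity
  rcases Nat.even_or_odd n with he | ho
  · -- n even, n = j+j with j ≥ 1
    obtain ⟨j, rfl⟩ := he
    have hnotodd : ¬ Odd (j+j) := by simp [Nat.odd_iff]; omega
    obtain ⟨i, rfl⟩ : ∃ i, j = i + 1 := ⟨j - 1, by omega⟩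
    have hdiv : (i+1+(i+1)) / 2 = i + 1 := by omega
    have hSb := S_bounds i
    have hcast : ((i+1+(i+1) : ℕ) : ℝ) = 2*(i:ℝ)+2 := by push_cast; ring
    have h1 := coord_bound i (i+1+1) hSb.1 hSb.2.1
    have h2 := coord_bound i (i+1+1) hSb.2.2.1 hSb.2.2.2
    simp only [fK', hnotodd, if_false, hdiv]
    have e1 : 2*(((i+1+1:ℕ):ℝ) + i) * Real.log 2 = 2*((i+1+(i+1):ℕ):ℝ)*Real.log 2 := by push_cast; ring
    have e2 : 2*(((i+1+1:ℕ):ℝ) + i + 1) * Real.log 2 = (2*((i+1+(i+1):ℕ):ℝ)+2)*Real.log 2 := by push_cast; ring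
    rw [e1, e2] at h1 h2
    exact ⟨key _ _ hd12 le_rfl (by linarith) h1.1 h1.2,
           key _ _ hd12 le_rfl (by linarith) h2.1 h2.2⟩
  · -- n odd, n = 2j+1 with j ≥ 1
    obtain ⟨j, rfl⟩ := ho
    obtain ⟨i, rfl⟩ : ∃ i, j = i + 1 := ⟨j - 1, by omega⟩
    have hodd : Odd (2*(i+1)+1) := ⟨i+1, by ring⟩
    have hdiv : (2*(i+1)+1+1) / 2 = i + 1 + 1 := by omega
    have hSb := S_bounds (i+1)
    have h1 := coord_bound (i+1) (i+1+1) hSb.1 hSb.2.1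
    have h2 := coord_bound (i+1) (i+1+1) hSb.2.2.1 hSb.2.2.2
    simp only [fK', hodd, if_true, hdiv]
    have e1 : 2*(((i+1+1:ℕ):ℝ) + ((i+1:ℕ):ℝ)) * Real.log 2 = 2*((2*(i+1)+1:ℕ):ℝ)*Real.log 2 := by push_cast; ring
    have e2 : 2*(((i+1+1:ℕ):ℝ) + ((i+1:ℕ):ℝ) + 1) * Real.log 2 = (2*((2*(i+1)+1:ℕ):ℝ)+2)*Real.log 2 := by push_cast; ring
    rw [e1, e2] at h1 h2
    exact ⟨key _ _ hd9 (by linarith) le_rfl h1.1 h1.2,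
           key _ _ hd9 (by linarith) le_rfl h2.1 h2.2⟩

lemma aux_tendsto (c d : ℝ) :
    Tendsto (fun n : ℕ => (4 * (n:ℝ) + c) * Real.log 2 / (15 * (n:ℝ) - d)) atTop
      (𝓝 (4 * Real.log 2 / 15)) := by
  have h1 := tendsto_const_div_atTop_nhds_zero_nat c
  have h2 := tendsto_const_div_atTop_nhds_zero_nat d
  have h3 : Tendsto (fun n : ℕ => (4 + c / n) * Real.log 2 / (15 - d / n)) atTop
      (𝓝 ((4 + 0) * Real.log 2 / (15 - 0))) :=
    ((tendsto_const_nhds.add h1).mul tendsto_const_nhds).div (tendsto_const_nhds.sub h2)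
      (by norm_num)
  have h4 : ((4:ℝ) + 0) * Real.log 2 / (15 - 0) = 4 * Real.log 2 / 15 := by norm_num
  rw [h4] at h3
  apply h3.congr'
  filter_upwards [eventually_gt_atTop 0] with n hn
  have hn' : (n:ℝ) ≠ 0 := Nat.cast_ne_zero.mpr hn.ne'
  field_simp

lemma tendsto_fK' : Tendsto fK' atTop (𝓝 (4 * Real.log 2 / 15, 4 * Real.log 2 / 15)) := by
  rw [Prod.tendsto_iff]
  have hlo := aux_tendsto 0 9
  have hhi := aux_tendsto 4 12
  constructor
  · apply tendsto_of_tendsto_of_tendsto_of_le_of_le' hlo hhi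
    · filter_upwards [fK'_mem] with n h; exact h.1.1
    · filter_upwards [fK'_mem] with n h; exact h.1.2
  · apply tendsto_of_tendsto_of_tendsto_of_le_of_le' hlo hhi
    · filter_upwards [fK'_mem] with n h; exact h.2.1
    · filter_upwards [fK'_mem] with n h; exact h.2.2


/-- Every limit point `L = (L₁, L₂)` of the sequence `(f(K'_n))` satisfies
`ln 12/15 ≤ Lᵢ ≤ 4·ln 2/15 < ln 2/3`; in particular `L ≠ (0,0)` and
`L ≠ (ln 2/3, ln 2/3)`. -/
theorem f_K'n_limit_points (L : ℝ × ℝ) (hL : MapClusterPt L atTop fK') :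
    (Real.log 12 / 15 ≤ L.1 ∧ L.1 ≤ 4 * Real.log 2 / 15 ∧
      Real.log 12 / 15 ≤ L.2 ∧ L.2 ≤ 4 * Real.log 2 / 15) ∧
    4 * Real.log 2 / 15 < Real.log 2 / 3 ∧
    L ≠ ((0 : ℝ), (0 : ℝ)) ∧ L ≠ (Real.log 2 / 3, Real.log 2 / 3) := by
  have hlog2 : 0 < Real.log 2 := Real.log_pos (by norm_num)
  have h12 : Real.log 12 ≤ 4 * Real.log 2 := by
    have h1 : Real.log 12 ≤ Real.log 16 := Real.log_le_log (by norm_num) (by norm_num)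
    have h2 : Real.log 16 = 4 * Real.log 2 := by
      rw [show (16:ℝ) = 2^4 by norm_num, Real.log_pow]; push_cast; ring
    linarith
  have hLeq : L = (4 * Real.log 2 / 15, 4 * Real.log 2 / 15) := by
    have h1 : (𝓝 L ⊓ map fK' atTop).NeBot := hL
    have h2 : map fK' atTop ≤ 𝓝 ((4 * Real.log 2 / 15, 4 * Real.log 2 / 15) : ℝ × ℝ) :=
      tendsto_fK'
    exact eq_of_nhds_neBot (h1.mono (inf_le_inf_left _ h2))
  subst hLeq
  refine ⟨⟨by linarith, le_rfl, by linarith, le_rfl⟩, by linarith, ?_, ?_⟩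
  · intro h
    have := congrArg Prod.fst h
    simp only [Prod.fst] at this
    linarith
  · intro h
    have := congrArg Prod.fst h
    simp only [Prod.fst] at this
    linarith
end

section
/- For every a, b in S_4 = Z_2[T]/(T^2+T+1), the product Φ(a,b) = φ(a,b)·φ(b, Ta+(1−T)b)·φ(Ta+(1−T)b, a) in Z/2Z (written multiplicatively as {1,t}) equals 1 if a = b and t if a ≠ b. -/
/-- The ring `(ℤ/2ℤ)[T]/(T²+T+1)`. -/
def R2 : Type :=
  Polynomial (ZMod 2) ⧸ Ideal.span ({Polynomial.X ^ 2 + Polynomial.X + 1} : Set (Polynomial (ZMod 2)))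

noncomputable instance : CommRing R2 := Ideal.Quotient.commRing _

/-- The image of the variable `T` in the quotient. -/
noncomputable def Tq : R2 :=
  Ideal.Quotient.mk _ Polynomial.X

set_option synthInstance.maxHeartbeats 1000000

open Polynomial in
lemma two_R2 : (2 : R2) = 0 := by
  have h : ((2 : Polynomial (ZMod 2))) = 0 := by
    rw [show (2 : Polynomial (ZMod 2)) = C 2 from (map_ofNat C 2).symm]
    simp [show (2 : ZMod 2) = 0 from rfl]
  have : (2 : R2) = Ideal.Quotient.mk _ (2 : Polynomial (ZMod 2)) := by
    exact (map_ofNat _ 2).symm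
  rw [this, h, map_zero]; rfl

open Polynomial in
lemma Tq_rel : Tq ^ 2 + Tq + 1 = 0 := by
  have : (Ideal.Quotient.mk (Ideal.span ({X ^ 2 + X + 1} : Set (Polynomial (ZMod 2)))))
      (X ^ 2 + X + 1) = 0 :=
    Ideal.Quotient.eq_zero_iff_mem.mpr (Ideal.subset_span rfl)
  simp only [map_add, map_pow, map_one] at this; exact this

open Polynomial in
lemma mk_inj {r s : Polynomial (ZMod 2)} (hr : r.degree < 2) (hs : s.degree < 2)
    (h : Ideal.Quotient.mk (Ideal.span ({X ^ 2 + X + 1} : Set (Polynomial (ZMod 2)))) r =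
         Ideal.Quotient.mk _ s) : r = s := by
  have hdvd : (X ^ 2 + X + 1 : Polynomial (ZMod 2)) ∣ r - s :=
    Ideal.mem_span_singleton.mp (Ideal.Quotient.eq.mp h)
  have hdeg : (X ^ 2 + X + 1 : Polynomial (ZMod 2)).degree = 2 := by
    compute_degree!
  have hlt : (r - s).degree < (X ^ 2 + X + 1 : Polynomial (ZMod 2)).degree := by
    rw [hdeg]
    exact lt_of_le_of_lt (degree_sub_le r s) (max_lt hr hs)
  have := Polynomial.eq_zero_of_dvd_of_degree_lt hdvd hlt
  exact sub_eq_zero.mp this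

open Polynomial in
lemma deg0 : (0 : Polynomial (ZMod 2)).degree < 2 := by rw [Polynomial.degree_zero]; decide
open Polynomial in
lemma deg1 : (1 : Polynomial (ZMod 2)).degree < 2 := by
  simpa using lt_of_le_of_lt degree_one_le (by decide : (0 : WithBot ℕ) < 2)
open Polynomial in
lemma degX : (X : Polynomial (ZMod 2)).degree < 2 := by
  rw [degree_X]; decide
open Polynomial in
lemma degX1 : (X + 1 : Polynomial (ZMod 2)).degree < 2 := by
  refine lt_of_le_of_lt (degree_add_le _ _) (max_lt ?_ ?_)
  · rw [degree_X]; decide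
  · exact lt_of_le_of_lt degree_one_le (by decide)

lemma Tq1_eq : Tq + 1 = Ideal.Quotient.mk _ (Polynomial.X + 1) := by
  rw [map_add, map_one]; rfl

lemma ne01 : (0 : R2) ≠ 1 := by
  intro h
  have := mk_inj deg0 deg1 (by rw [map_zero, map_one]; exact h)
  simp at this
lemma ne0T : (0 : R2) ≠ Tq := by
  intro h
  have := mk_inj deg0 degX (by rw [map_zero]; exact h)
  exact Polynomial.X_ne_zero this.symm
lemma ne0T1 : (0 : R2) ≠ Tq + 1 := by
  intro h
  have := mk_inj deg0 degX1 (by rw [map_zero, map_add, map_one]; exact h)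
  have := congrArg (fun p => Polynomial.coeff p 0) this
  simp at this
lemma ne1T : (1 : R2) ≠ Tq := by
  intro h
  have := mk_inj deg1 degX (by rw [map_one]; exact h)
  have := congrArg (fun p => Polynomial.coeff p 0) this
  simp at this
lemma ne1T1 : (1 : R2) ≠ Tq + 1 := by
  intro h
  have := mk_inj deg1 degX1 (by rw [map_one, map_add, map_one]; exact h)
  have := congrArg (fun p => Polynomial.coeff p 1) this
  simp at this
lemma neTT1 : Tq ≠ Tq + 1 := by
  intro h
  have := mk_inj degX degX1 (by rw [map_add, map_one]; exact h)
  have := congrArg (fun p => Polynomial.coeff p 0) this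
  simp at this

open Polynomial in
lemma cases_R2 (a : R2) : a = 0 ∨ a = 1 ∨ a = Tq ∨ a = Tq + 1 := by
  obtain ⟨p, rfl⟩ := Ideal.Quotient.mk_surjective a
  set f : Polynomial (ZMod 2) := X ^ 2 + X + 1 with hf
  have hmonic : f.Monic := by unfold f; monicity!
  have hdegf : f.degree = 2 := by unfold f; compute_degree!
  set r := p %ₘ f with hr
  have hmk : Ideal.Quotient.mk (Ideal.span ({f} : Set (Polynomial (ZMod 2)))) p =
      Ideal.Quotient.mk _ r := by
    rw [Ideal.Quotient.eq, Ideal.mem_span_singleton]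
    exact ⟨p /ₘ f, by rw [hr]; nth_rewrite 1 [← modByMonic_add_div p f]; ring⟩
  have hdr : r.degree < 2 := hdegf ▸ degree_modByMonic_lt p hmonic
  have hle : r.degree ≤ 1 := by
    by_contra h
    have h2 : (1 : WithBot ℕ) + 1 ≤ r.degree := Nat.WithBot.add_one_le_of_lt (not_le.mp h)
    have : (2 : WithBot ℕ) ≤ r.degree := by
      have e : (1 : WithBot ℕ) + 1 = 2 := by norm_num
      rwa [e] at h2
    exact absurd hdr (not_lt.mpr this)
  have hrep : r = C (r.coeff 1) * X + C (r.coeff 0) := eq_X_add_C_of_degree_le_one hle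
  have hcase : ∀ c : ZMod 2, c = 0 ∨ c = 1 := by decide
  rw [hmk]
  rcases hcase (r.coeff 1) with h1 | h1 <;> rcases hcase (r.coeff 0) with h0 | h0 <;>
    rw [hrep, h1, h0] <;> simp [map_add, map_mul, map_one, map_zero, Tq] <;> tauto

/-- The quandle operation `a * b = T·a + (1-T)·b`. -/
noncomputable def qop (a b : R2) : R2 := Tq * a + (1 - Tq) * b

lemma q00 : qop 0 0 = 0 := by unfold qop; ring
lemma q01 : qop 0 1 = Tq + 1 := by unfold qop; linear_combination (-Tq) * two_R2
lemma q0T : qop 0 Tq = 1 := by unfold qop; linear_combination -Tq_rel + Tq * two_R2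
lemma q0T1 : qop 0 (Tq + 1) = Tq := by unfold qop; linear_combination -Tq_rel + two_R2
lemma q10 : qop 1 0 = Tq := by unfold qop; ring
lemma q11 : qop 1 1 = 1 := by unfold qop; ring
lemma q1T : qop 1 Tq = Tq + 1 := by unfold qop; linear_combination -Tq_rel + Tq * two_R2
lemma q1T1 : qop 1 (Tq + 1) = 0 := by
  unfold qop; linear_combination -Tq_rel + Tq * two_R2 + two_R2
lemma qT0 : qop Tq 0 = Tq + 1 := by
  unfold qop; linear_combination Tq_rel - Tq * two_R2 - two_R2
lemma qT1 : qop Tq 1 = 0 := by unfold qop; linear_combination Tq_rel - Tq * two_R2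
lemma qTT : qop Tq Tq = Tq := by unfold qop; ring
lemma qTT1 : qop Tq (Tq + 1) = 1 := by unfold qop; ring
lemma qT10 : qop (Tq + 1) 0 = 1 := by unfold qop; linear_combination Tq_rel - two_R2
lemma qT11 : qop (Tq + 1) 1 = Tq := by unfold qop; linear_combination Tq_rel - Tq * two_R2
lemma qT1T : qop (Tq + 1) Tq = 0 := by unfold qop; linear_combination Tq * two_R2
lemma qT1T1 : qop (Tq + 1) (Tq + 1) = Tq + 1 := by unfold qop; ring

/-- The group `A = ℤ/2ℤ = ⟨t | t² = 1⟩`, written multiplicatively. -/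
abbrev A2 : Type := Multiplicative (ZMod 2)

/-- The generator `t` of `A = ⟨t | t² = 1⟩`. -/
def tA : A2 := Multiplicative.ofAdd (1 : ZMod 2)

open Classical in
/-- The 2-cocycle `φ(a,b) = t^{χ_{(0,1)}+χ_{(0,T+1)}+χ_{(1,0)}+χ_{(1,T+1)}+χ_{(T+1,0)}+χ_{(T+1,1)}}`. -/
noncomputable def phi (a b : R2) : A2 :=
  tA ^ ((if (a, b) = ((0 : R2), (1 : R2)) then 1 else 0) +
        (if (a, b) = ((0 : R2), Tq + 1) then 1 else 0) +
        (if (a, b) = ((1 : R2), (0 : R2)) then 1 else 0) +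
        (if (a, b) = ((1 : R2), Tq + 1) then 1 else 0) +
        (if (a, b) = (Tq + 1, (0 : R2)) then 1 else 0) +
        (if (a, b) = (Tq + 1, (1 : R2)) then 1 else 0) : ℕ)

open Classical in
/-- `Φ(a,b) = φ(a,b)·φ(b, a*b)·φ(a*b, a)` equals `1` if `a = b` and `t` otherwise. -/
theorem Phi_eq (a b : R2) :
    phi a b * phi b (qop a b) * phi (qop a b) a = if a = b then 1 else tA := by
  rcases cases_R2 a with rfl | rfl | rfl | rfl <;> rcases cases_R2 b with rfl | rfl | rfl | rfl <;>
    simp [phi, q00, q01, q0T, q0T1, q10, q11, q1T, q1T1, qT0, qT1, qTT, qTT1, qT10, qT11,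
      qT1T, qT1T1, Prod.ext_iff, Prod.mk.injEq, ne01, ne0T, ne0T1, ne1T, ne1T1, neTT1,
      Ne.symm ne01, Ne.symm ne0T, Ne.symm ne0T1, Ne.symm ne1T, Ne.symm ne1T1, Ne.symm neTT1,
      tA] <;>
    decide
end
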